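/- Let c, d ∈ (0,1) and define g(α,γ) = (1+αγ)/(1−αγ)³. As c → d (with c, d fixed in a compact subset of (0,1)), the quantity γ(c,d) = √((g(c,c) − g(d,d))² + 4 g(c,d)²) / (g(c,c) + g(d,d)) tends to 1, and consequently the condition number (1+γ)/(1−γ) tends to infinity. In particular, at c = d, γ(d,d) = 1. -/
import Mathlib

open Real Filter Set

private lemma aux_abstract (A B C : ℝ) (hA : 0 < A) (hC : 0 < C) (hB : B ≠ 0)
    (hAB : 0 ≤ A^2 - B^2) :
    C^2 * (A^2 - B^2)^3 < (C^2 + B^2) * A^6 := by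
  have hB2 : 0 < B^2 := by positivity
  have h2 : 0 ≤ 2*A^2 - B^2 := by nlinarith
  have h3 : (A^2-B^2)^3 ≤ (A^2-B^2)*A^4 := by
    nlinarith [mul_nonneg (mul_nonneg hAB (sq_nonneg B)) h2]
  have h4 : C^2 * (A^2-B^2)^3 ≤ C^2 * ((A^2-B^2)*A^4) :=
    mul_le_mul_of_nonneg_left h3 (sq_nonneg C)
  nlinarith [mul_pos hB2 (pow_pos hA 6), mul_nonneg (mul_nonneg (sq_nonneg C) (sq_nonneg B)) (pow_nonneg hA.le 4)]

private lemma aux_cs {c d : ℝ} (hc : c ∈ Set.Ioo (0:ℝ) 1) (hd : d ∈ Set.Ioo (0:ℝ) 1)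
    (hne : c ≠ d) :
    ((1 + c*d)/(1 - c*d)^3)^2 < ((1 + c*c)/(1 - c*c)^3) * ((1 + d*d)/(1 - d*d)^3) := by
  obtain ⟨hc0, hc1⟩ := hc; obtain ⟨hd0, hd1⟩ := hd
  have hcd : c*d < 1 := by nlinarith
  have hcc : c*c < 1 := by nlinarith
  have hdd : d*d < 1 := by nlinarith
  rw [div_pow, div_mul_div_comm,
    div_lt_div_iff₀ (pow_pos (pow_pos (by linarith : (0:ℝ) < 1 - c*d) 3) 2) (by nlinarith [mul_pos (pow_pos (by linarith : (0:ℝ) < 1 - c*c) 3) (pow_pos (by linarith : (0:ℝ) < 1 - d*d) 3)])]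
  have key := aux_abstract (1 - c*d) (c - d) (1 + c*d) (by linarith) (by nlinarith)
    (sub_ne_zero.mpr hne) (by nlinarith [mul_pos (by linarith : (0:ℝ) < 1 - c*c) (by linarith : (0:ℝ) < 1 - d*d)])
  nlinarith [key]

theorem gamma_tends_to_one_condition_number_blows_up
    (d : ℝ) (hd : d ∈ Set.Ioo (0 : ℝ) 1)
    (g : ℝ → ℝ → ℝ) (hg : ∀ a b : ℝ, g a b = (1 + a * b) / (1 - a * b) ^ 3)
    (γ : ℝ → ℝ)
    (hγ : ∀ c : ℝ, γ c =
      Real.sqrt ((g c c - g d d) ^ 2 + 4 * (g c d) ^ 2) / (g c c + g d d)) :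
    γ d = 1 ∧
    Filter.Tendsto γ (nhdsWithin d (Set.Ioo (0 : ℝ) 1 \ {d})) (nhds 1) ∧
    Filter.Tendsto (fun c => (1 + γ c) / (1 - γ c))
      (nhdsWithin d (Set.Ioo (0 : ℝ) 1 \ {d})) Filter.atTop := by
  obtain ⟨hd0, hd1⟩ := hd
  have hdd1 : d*d < 1 := by nlinarith
  have hgdd : 0 < g d d := by
    rw [hg]; exact div_pos (by nlinarith) (pow_pos (by linarith) 3)
  -- Part 1
  have hγd : γ d = 1 := by
    rw [hγ, sub_self]
    have h0 : (0:ℝ)^2 + 4 * (g d d)^2 = (2 * g d d)^2 := by ring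
    rw [h0, Real.sqrt_sq (by positivity)]
    rw [div_eq_one_iff_eq (by positivity)]; ring
  -- Part 2 : continuity
  set f1 : ℝ → ℝ := fun c => (1 + c*c)/(1 - c*c)^3 with hf1def
  set f2 : ℝ → ℝ := fun c => (1 + c*d)/(1 - c*d)^3 with hf2def
  have hf1 : ContinuousAt f1 d := by
    apply ContinuousAt.div (by fun_prop) (by fun_prop)
    exact pow_ne_zero 3 (by nlinarith)
  have hf2 : ContinuousAt f2 d := by
    apply ContinuousAt.div (by fun_prop) (by fun_prop)
    exact pow_ne_zero 3 (by nlinarith)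
  have hγeq : γ = fun c => Real.sqrt ((f1 c - g d d)^2 + 4 * (f2 c)^2) / (f1 c + g d d) := by
    funext c; rw [hγ c, hg c c, hg c d]
  have hf1d : f1 d = g d d := (hg d d).symm
  have hγc : ContinuousAt γ d := by
    rw [hγeq]
    apply ContinuousAt.div
    · exact (((hf1.sub continuousAt_const).pow 2).add
        ((continuousAt_const.mul (hf2.pow 2)))).sqrt
    · exact hf1.add continuousAt_const
    · rw [hf1d]; positivity
  have h2 : Filter.Tendsto γ (nhdsWithin d (Set.Ioo (0 : ℝ) 1 \ {d})) (nhds 1) := by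
    have h : Filter.Tendsto γ (nhdsWithin d (Set.Ioo (0 : ℝ) 1 \ {d})) (nhds (γ d)) :=
      hγc.tendsto.mono_left nhdsWithin_le_nhds
    rwa [hγd] at h
  refine ⟨hγd, h2, ?_⟩
  -- Part 3
  have hlt : ∀ c ∈ Set.Ioo (0:ℝ) 1 \ {d}, γ c < 1 := by
    rintro c ⟨hc1, hc2⟩
    obtain ⟨hc0, hcl1⟩ := hc1
    have hcc1 : c*c < 1 := by nlinarith
    have hgcc : 0 < g c c := by
      rw [hg]; exact div_pos (by nlinarith) (pow_pos (by linarith) 3)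
    have hgcd2 : (g c d)^2 < g c c * g d d := by
      rw [hg, hg, hg]; exact aux_cs ⟨hc0, hcl1⟩ ⟨hd0, hd1⟩ hc2
    rw [hγ, div_lt_one (by positivity)]
    refine (Real.sqrt_lt' (by positivity)).mpr ?_
    nlinarith [hgcd2]
  have h0 : Filter.Tendsto (fun c => 1 - γ c) (nhdsWithin d (Set.Ioo (0 : ℝ) 1 \ {d}))
      (nhdsWithin 0 (Set.Ioi 0)) := by
    apply tendsto_nhdsWithin_of_tendsto_nhds_of_eventually_within
    · have hs : Filter.Tendsto (fun c => 1 - γ c) (nhdsWithin d (Set.Ioo (0 : ℝ) 1 \ {d}))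
          (nhds (1 - 1)) := Filter.Tendsto.sub tendsto_const_nhds h2
      simpa using hs
    · filter_upwards [self_mem_nhdsWithin] with c hc
      exact sub_pos.mpr (hlt c hc)
  have hinv : Filter.Tendsto (fun c => (1 - γ c)⁻¹)
      (nhdsWithin d (Set.Ioo (0 : ℝ) 1 \ {d})) Filter.atTop :=
    tendsto_inv_nhdsGT_zero.comp h0
  have hnum : Filter.Tendsto (fun c => 1 + γ c)
      (nhdsWithin d (Set.Ioo (0 : ℝ) 1 \ {d})) (nhds 2) := by
    have hs : Filter.Tendsto (fun c => 1 + γ c) (nhdsWithin d (Set.Ioo (0 : ℝ) 1 \ {d}))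
        (nhds (1 + 1)) := Filter.Tendsto.add tendsto_const_nhds h2
    norm_num at hs
    exact hs
  have := Filter.Tendsto.pos_mul_atTop (by norm_num : (0:ℝ) < 2) hnum hinv
  simpa [div_eq_mul_inv] using this
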